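/- For every n ≥ 1, the number of random walk labelings of the King's graph KG_{2,n} whose label 1 lies in the first column (i.e., on a vertex (i,1) with i ∈ {1,2}) equals (2n)!/n!. -/

import Mathlib

/-- The King's graph of size `2 × n`: two distinct vertices `(i₁,j₁)`, `(i₂,j₂)` are adjacent
iff `|i₁ - i₂| ≤ 1` and `|j₁ - j₂| ≤ 1`. -/
def kingGraph (n : ℕ) : SimpleGraph (Fin 2 × Fin n) :=
  SimpleGraph.fromRel
    (fun a b => |(a.1 : ℤ) - (b.1 : ℤ)| ≤ 1 ∧ |(a.2 : ℤ) - (b.2 : ℤ)| ≤ 1)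


def Graded (M : ℕ) (c : ℕ → ℕ) : Prop := ∀ k < M, ∀ j < c k, ∃ l < k, c l = j

def SeqOK (n : ℕ) (c : ℕ → ℕ) : Prop :=
  (∀ j < n, ((Finset.range (2*n)).filter (fun k => c k = j)).card = 2) ∧
  (∀ k, 2*n ≤ k → c k = 0) ∧ (∀ k < 2*n, c k < n) ∧ Graded (2*n) c

def Seqn (n : ℕ) := {c : ℕ → ℕ // SeqOK n c}

lemma graded_c0 {M c} (h : Graded M c) (hM : 0 < M) : c 0 = 0 := by
  by_contra h0
  obtain ⟨l, hl, -⟩ := h 0 hM 0 (Nat.pos_of_ne_zero h0)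
  omega

lemma graded_of_valid {M c} (h0 : c 0 = 0)
    (hv : ∀ k < M, k ≠ 0 → ∃ l < k, c l ≤ c k + 1 ∧ c k ≤ c l + 1) :
    Graded M c := by
  have aux : ∀ k, k < M → ∀ j ≤ c k, ∃ l ≤ k, c l = j := by
    intro k
    induction k using Nat.strong_induction_on with
    | _ k ih =>
      intro hk j hj
      rcases Nat.eq_zero_or_pos k with rfl | hkpos
      · exact ⟨0, le_refl 0, by omega⟩
      obtain ⟨l, hl, hd1, hd2⟩ := hv k hk (by omega)
      rcases le_or_gt (c k) (c l) with hle | hlt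
      · obtain ⟨l', hl', hcl'⟩ := ih l hl (by omega) j (le_trans hj hle)
        exact ⟨l', by omega, hcl'⟩
      · rcases Nat.lt_or_ge j (c k) with hj' | hj'
        · obtain ⟨l', hl', hcl'⟩ := ih l hl (by omega) j (by omega)
          exact ⟨l', by omega, hcl'⟩
        · exact ⟨k, le_refl k, by omega⟩
  intro k hk j hj
  obtain ⟨l, hl, hcl⟩ := aux k hk j (le_of_lt hj)
  have hne : l ≠ k := fun e => by rw [e] at hcl; omega
  exact ⟨l, by omega, hcl⟩

lemma valid_of_graded {M c} (h : Graded M c) :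
    ∀ k < M, k ≠ 0 → ∃ l < k, c l ≤ c k + 1 ∧ c k ≤ c l + 1 := by
  intro k hk hk0
  rcases Nat.eq_zero_or_pos (c k) with hck | hck
  · refine ⟨0, by omega, ?_⟩
    have := graded_c0 h (by omega)
    omega
  · obtain ⟨l, hl, hcl⟩ := h k hk (c k - 1) (by omega)
    exact ⟨l, hl, by omega⟩

lemma dcl_eq_range {s : Finset ℕ} (h : ∀ a ∈ s, ∀ b < a, b ∈ s) :
    s = Finset.range s.card := by
  have key : ∀ x, x ∈ s ↔ x < s.card := by
    intro x
    constructor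
    · intro hx
      have hsub : Finset.range (x+1) ⊆ s := by
        intro b hb
        simp only [Finset.mem_range] at hb
        rcases Nat.lt_or_ge b x with hb' | hb'
        · exact h x hx b hb'
        · have : b = x := by omega
          subst this; exact hx
      have := Finset.card_le_card hsub
      simp at this; omega
    · intro hx
      by_contra hxs
      have hsub : s ⊆ Finset.range x := by
        intro a ha
        simp only [Finset.mem_range]
        by_contra hax
        rcases Nat.lt_or_ge x a with h' | h'
        · exact hxs (h a ha x h')
        · have : a = x := by omega
          subst this; exact hxs ha
      have := Finset.card_le_card hsub
      simp at this; omega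
  ext x; simp [key]

def ιf (p k : ℕ) : ℕ := if k < p then k else k + 1

def ρf (p k : ℕ) : ℕ := if k < p then k else k - 1

def liftv (t x : ℕ) : ℕ := if x < t then x else x + 1

def dropv (t x : ℕ) : ℕ := if x < t then x else x - 1

lemma ρι (p k : ℕ) : ρf p (ιf p k) = k := by unfold ιf ρf; split_ifs <;> omega

lemma ιρ (p q : ℕ) (h : q ≠ p) : ιf p (ρf p q) = q := by unfold ιf ρf; split_ifs <;> omega

lemma ι_ne (p k : ℕ) : ιf p k ≠ p := by unfold ιf; split_ifs <;> omega

lemma ι_lt (p k K : ℕ) (h : k < K) : ιf p k < K + 1 := by unfold ιf; split_ifs <;> omega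

lemma exists_partner {n : ℕ} {c : ℕ → ℕ} (h : SeqOK (n+1) c) :
    ∃ p, p < 2*n+1 ∧ c p = c (2*n+1) ∧
      ∀ q < 2*n+2, c q = c (2*n+1) → q = p ∨ q = 2*n+1 := by
  obtain ⟨hfib, hjunk, hbd, hgr⟩ := h
  have hL : 2*n+1 < 2*(n+1) := by omega
  have hjs : c (2*n+1) < n+1 := hbd _ hL
  have h2 := hfib _ hjs
  rw [Finset.card_eq_two] at h2
  obtain ⟨a, b, hab, hs⟩ := h2
  have hLs : (2*n+1) ∈ (Finset.range (2*(n+1))).filter (fun k => c k = c (2*n+1)) := by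
    simp [hL]
  rw [hs] at hLs
  simp only [Finset.mem_insert, Finset.mem_singleton] at hLs
  have mem_iff : ∀ q, q < 2*(n+1) ∧ c q = c (2*n+1) ↔ q = a ∨ q = b := by
    intro q
    constructor
    · intro ⟨h1, h2⟩
      have : q ∈ (Finset.range (2*(n+1))).filter (fun k => c k = c (2*n+1)) := by simp [h1, h2]
      rw [hs] at this; simpa using this
    · intro hq
      have : q ∈ ({a, b} : Finset ℕ) := by simpa using hq
      rw [← hs] at this; simpa using this
  rcases hLs with rfl | rfl
  · -- L = a, partner = b
    have hb := (mem_iff b).2 (Or.inr rfl)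
    refine ⟨b, by omega, hb.2, ?_⟩
    intro q hq hcq
    rcases (mem_iff q).1 ⟨by omega, hcq⟩ with h | h
    · right; omega
    · left; exact h
  · -- L = b, partner = a
    have ha := (mem_iff a).2 (Or.inl rfl)
    refine ⟨a, by omega, ha.2, ?_⟩
    intro q hq hcq
    rcases (mem_iff q).1 ⟨by omega, hcq⟩ with h | h
    · left; exact h
    · right; omega

lemma prefix_lt {n : ℕ} {c : ℕ → ℕ} (h : SeqOK (n+1) c) {p : ℕ}
    (hp : p < 2*n+1) (hcp : c p = c (2*n+1))
    (huniq : ∀ q < 2*n+2, c q = c (2*n+1) → q = p ∨ q = 2*n+1) :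
    ∀ l < p, c l < c (2*n+1) := by
  obtain ⟨hfib, hjunk, hbd, hgr⟩ := h
  intro l hl
  rcases Nat.lt_trichotomy (c l) (c (2*n+1)) with h | h | h
  · exact h
  · exfalso
    rcases huniq l (by omega) h with rfl | rfl <;> omega
  · exfalso
    obtain ⟨l', hl', hcl'⟩ := hgr l (by omega) (c (2*n+1)) h
    rcases huniq l' (by omega) hcl' with rfl | rfl <;> omega

lemma dropv_liftv (t j : ℕ) : dropv t (liftv t j) = j := by unfold dropv liftv; split_ifs <;> omega

lemma liftv_ne (t j : ℕ) : liftv t j ≠ t := by unfold liftv; split_ifs <;> omega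

lemma eq_liftv {t x j : ℕ} (hx : x ≠ t) (h : dropv t x = j) : x = liftv t j := by
  unfold dropv at h; unfold liftv; split_ifs at h ⊢ <;> omega

lemma ρ_lt {p l k : ℕ} (h : l < ιf p k) (hl : l ≠ p) : ρf p l < k := by
  unfold ιf at h; unfold ρf; split_ifs at h ⊢ <;> omega

lemma ρ_ne_inj {p q1 q2 : ℕ} (h1 : q1 ≠ p) (h2 : q2 ≠ p) (h : ρf p q1 = ρf p q2) : q1 = q2 := by
  unfold ρf at h; split_ifs at h <;> omega

def delSeq (n p t : ℕ) (c : ℕ → ℕ) : ℕ → ℕ := fun k => if k < 2*n then dropv t (c (ιf p k)) else 0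

lemma del_ok {n : ℕ} {c : ℕ → ℕ} (h : SeqOK (n+1) c) {p : ℕ}
    (hp : p < 2*n+1) (hcp : c p = c (2*n+1))
    (huniq : ∀ q < 2*n+2, c q = c (2*n+1) → q = p ∨ q = 2*n+1) :
    SeqOK n (delSeq n p (c (2*n+1)) c) := by
  obtain ⟨hfib, hjunk, hbd, hgr⟩ := h
  set t := c (2*n+1) with ht
  have htn : t < n+1 := hbd _ (by omega)
  -- c (ιf p k) ≠ t for k < 2n
  have hne : ∀ k < 2*n, c (ιf p k) ≠ t := by
    intro k hk hc
    have h1 : ιf p k < 2*(n+1) := by unfold ιf; split_ifs <;> omega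
    rcases huniq _ (by omega) hc with h2 | h2
    · exact ι_ne p k h2
    · unfold ιf at h2; split_ifs at h2 <;> omega
  have hbd' : ∀ k < 2*n, c (ιf p k) < n + 1 := by
    intro k hk
    exact hbd _ (by unfold ιf; split_ifs <;> omega)
  refine ⟨?_, fun k hk => by simp [delSeq]; omega, ?_, ?_⟩
  · -- fibers
    intro j hj
    have key : (Finset.range (2*n)).filter (fun k => delSeq n p t c k = j) =
        ((Finset.range (2*(n+1))).filter (fun k => c k = liftv t j)).image (ρf p) := by
      ext k
      simp only [Finset.mem_filter, Finset.mem_range, Finset.mem_image]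
      constructor
      · rintro ⟨hk, hck⟩
        refine ⟨ιf p k, ⟨?_, ?_⟩, ρι p k⟩
        · unfold ιf; split_ifs <;> omega
        · have : dropv t (c (ιf p k)) = j := by
            simpa [delSeq, hk] using hck
          exact eq_liftv (hne k hk) this
      · rintro ⟨q, ⟨hq1, hq2⟩, rfl⟩
        have hqp : q ≠ p := fun e => by rw [e, hcp] at hq2; exact liftv_ne t j hq2.symm
        have hqL : q ≠ 2*n+1 := fun e => by rw [e] at hq2; exact liftv_ne t j hq2.symm
        have hqk : ρf p q < 2*n := by unfold ρf; split_ifs <;> omega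
        refine ⟨hqk, ?_⟩
        simp only [delSeq, if_pos hqk, ιρ p q hqp, hq2, dropv_liftv]
    rw [key, Finset.card_image_of_injOn, hfib _ (by unfold liftv; split_ifs <;> omega)]
    intro q1 hq1 q2 hq2 he
    simp only [Finset.mem_coe, Finset.mem_filter] at hq1 hq2
    have h1 : q1 ≠ p := fun e => by rw [e, hcp] at hq1; exact liftv_ne t j hq1.2.symm
    have h2 : q2 ≠ p := fun e => by rw [e, hcp] at hq2; exact liftv_ne t j hq2.2.symm
    exact ρ_ne_inj h1 h2 he
  · -- bound
    intro k hk
    have := hbd' k hk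
    have := hne k hk
    simp only [delSeq, if_pos hk]
    unfold dropv; split_ifs <;> omega
  · -- graded
    intro k hk j hj
    simp only [delSeq, if_pos hk] at hj
    set x := c (ιf p k) with hx
    have hxt : x ≠ t := hne k hk
    have hkι : ιf p k < 2*(n+1) := by unfold ιf; split_ifs <;> omega
    have hjorig : liftv t j < x := by
      unfold dropv at hj; unfold liftv; split_ifs at hj ⊢ <;> omega
    obtain ⟨l, hl, hcl⟩ := hgr (ιf p k) hkι (liftv t j) hjorig
    have hlp : l ≠ p := fun e => by rw [e, hcp] at hcl; exact liftv_ne t j hcl.symm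
    refine ⟨ρf p l, ρ_lt hl hlp, ?_⟩
    have hl2n : ρf p l < 2*n := lt_of_lt_of_le (ρ_lt hl hlp) (by omega)
    simp only [delSeq, if_pos hl2n, ιρ p l hlp, hcl, dropv_liftv]

def jstar (p : ℕ) (c : ℕ → ℕ) : ℕ := ((Finset.range p).image c).card

def insSeq (n p : ℕ) (c : ℕ → ℕ) : ℕ → ℕ := fun k =>
  if k < 2*n+2 then
    if k = p ∨ k = 2*n+1 then jstar p c
    else liftv (jstar p c) (c (ρf p k))
  else 0

lemma jstar_prefix {n : ℕ} {c : ℕ → ℕ} (h : SeqOK n c) {p : ℕ} (hp : p ≤ 2*n) :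
    ((Finset.range p).image c) = Finset.range (jstar p c) := by
  apply dcl_eq_range
  intro a ha b hb
  simp only [Finset.mem_image, Finset.mem_range] at ha ⊢
  obtain ⟨l, hl, rfl⟩ := ha
  obtain ⟨l', hl', hcl'⟩ := h.2.2.2 l (by omega) b hb
  exact ⟨l', by omega, hcl'⟩

lemma jstar_le {n : ℕ} {c : ℕ → ℕ} (h : SeqOK n c) {p : ℕ} (hp : p ≤ 2*n) :
    jstar p c ≤ n := by
  have : ((Finset.range p).image c) ⊆ Finset.range n := by
    intro x hx
    simp only [Finset.mem_image, Finset.mem_range] at hx ⊢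
    obtain ⟨l, hl, rfl⟩ := hx
    exact h.2.2.1 l (by omega)
  simpa [jstar] using Finset.card_le_card this

lemma prefix_lt_jstar {n : ℕ} {c : ℕ → ℕ} (h : SeqOK n c) {p : ℕ} (hp : p ≤ 2*n) :
    ∀ l < p, c l < jstar p c := by
  intro l hl
  have : c l ∈ (Finset.range p).image c := by
    simp only [Finset.mem_image, Finset.mem_range]; exact ⟨l, hl, rfl⟩
  rw [jstar_prefix h hp] at this
  simpa using this

lemma jstar_mem {n : ℕ} {c : ℕ → ℕ} (h : SeqOK n c) {p : ℕ} (hp : p ≤ 2*n) :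
    ∀ j < jstar p c, ∃ l < p, c l = j := by
  intro j hj
  have : j ∈ (Finset.range p).image c := by
    rw [jstar_prefix h hp]; simpa using hj
  simp only [Finset.mem_image, Finset.mem_range] at this
  obtain ⟨l, hl, hcl⟩ := this
  exact ⟨l, hl, hcl⟩

lemma ins_ok {n : ℕ} {c : ℕ → ℕ} (h : SeqOK n c) {p : ℕ} (hp : p < 2*n+1) :
    SeqOK (n+1) (insSeq n p c) := by
  obtain ⟨hfib, hjunk, hbd, hgr⟩ := h
  set t := jstar p c with ht
  have htn : t ≤ n := jstar_le ⟨hfib, hjunk, hbd, hgr⟩ (by omega)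
  have hpre : ∀ l < p, c l < t := prefix_lt_jstar ⟨hfib, hjunk, hbd, hgr⟩ (by omega)
  have hmem : ∀ j < t, ∃ l < p, c l = j := jstar_mem ⟨hfib, hjunk, hbd, hgr⟩ (by omega)
  -- values at non-special positions
  have hval : ∀ k < 2*n+2, k ≠ p → k ≠ 2*n+1 → insSeq n p c k = liftv t (c (ρf p k)) := by
    intro k h1 h2 h3
    simp only [insSeq, if_pos h1]
    rw [if_neg]; push_neg; exact ⟨h2, h3⟩
  have hspec : ∀ k, (k = p ∨ k = 2*n+1) → insSeq n p c k = t := by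
    intro k hk
    have : k < 2*n+2 := by omega
    simp only [insSeq, if_pos this, if_pos hk]
    exact ht.symm
  have hρbd : ∀ k < 2*n+2, k ≠ p → k ≠ 2*n+1 → ρf p k < 2*n := by
    intro k h1 h2 h3; unfold ρf; split_ifs <;> omega
  refine ⟨?_, fun k hk => by simp [insSeq]; omega, ?_, ?_⟩
  · -- fibers
    intro j hj
    rcases eq_or_ne j t with hjt | hjt
    · have : (Finset.range (2*(n+1))).filter (fun k => insSeq n p c k = j) = {p, 2*n+1} := by
        ext k
        simp only [Finset.mem_filter, Finset.mem_range, Finset.mem_insert, Finset.mem_singleton]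
        constructor
        · rintro ⟨hk, hck⟩
          by_contra hcon
          push_neg at hcon
          rw [hval k (by omega) hcon.1 hcon.2] at hck
          rw [hjt] at hck
          exact liftv_ne t _ hck
        · rintro (rfl | rfl)
          · exact ⟨by omega, (hspec _ (Or.inl rfl)).trans hjt.symm⟩
          · exact ⟨by omega, (hspec _ (Or.inr rfl)).trans hjt.symm⟩
      rw [this, Finset.card_insert_of_notMem (by simp; omega), Finset.card_singleton]
    · have hdj : dropv t j < n := by unfold dropv; split_ifs <;> omega
      have key : (Finset.range (2*(n+1))).filter (fun k => insSeq n p c k = j) =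
          ((Finset.range (2*n)).filter (fun k => c k = dropv t j)).image (ιf p) := by
        ext k
        simp only [Finset.mem_filter, Finset.mem_range, Finset.mem_image]
        constructor
        · rintro ⟨hk, hck⟩
          have hkp : k ≠ p := fun e => by rw [hspec k (Or.inl e)] at hck; exact hjt hck.symm
          have hkL : k ≠ 2*n+1 := fun e => by rw [hspec k (Or.inr e)] at hck; exact hjt hck.symm
          rw [hval k (by omega) hkp hkL] at hck
          refine ⟨ρf p k, ⟨hρbd k (by omega) hkp hkL, ?_⟩, ιρ p k hkp⟩
          rw [← hck, dropv_liftv]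
        · rintro ⟨q, ⟨hq1, hq2⟩, rfl⟩
          have h1 : ιf p q ≠ p := ι_ne p q
          have h2 : ιf p q ≠ 2*n+1 := by unfold ιf; split_ifs <;> omega
          have h3 : ιf p q < 2*(n+1) := by unfold ιf; split_ifs <;> omega
          refine ⟨h3, ?_⟩
          rw [hval _ h3 h1 h2, ρι, hq2]
          -- liftv t (dropv t j) = j given j ≠ t
          unfold liftv dropv at *; split_ifs at * <;> omega
      rw [key, Finset.card_image_of_injOn, hfib _ hdj]
      intro q1 _ q2 _ he
      unfold ιf at he; split_ifs at he <;> omega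
  · -- bound
    intro k hk
    rcases Classical.em (k = p ∨ k = 2*n+1) with hs | hs
    · rw [hspec k hs]; omega
    · push_neg at hs
      rw [hval k hk hs.1 hs.2]
      have := hbd (ρf p k) (hρbd k hk hs.1 hs.2)
      unfold liftv; split_ifs <;> omega
  · -- graded
    intro k hk j hj
    rcases Classical.em (k = p ∨ k = 2*n+1) with hs | hs
    · rw [hspec k hs] at hj
      obtain ⟨l, hl, hcl⟩ := hmem j hj
      have hlp : l ≠ p := by omega
      have hlL : l ≠ 2*n+1 := by omega
      refine ⟨l, by rcases hs with rfl | rfl <;> omega, ?_⟩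
      rw [hval l (by omega) hlp hlL]
      have : ρf p l = l := by unfold ρf; split_ifs <;> omega
      rw [this, hcl]
      unfold liftv; split_ifs <;> omega
    · push_neg at hs
      rw [hval k hk hs.1 hs.2] at hj
      set x := c (ρf p k) with hx
      have hxbd : ρf p k < 2*n := hρbd k hk hs.1 hs.2
      -- helper to produce witness from a c-witness
      have witness : ∀ j', j' < x → liftv t j' = j → ∃ l < k, insSeq n p c l = j := by
        intro j' hj' hlift
        obtain ⟨l', hl', hcl'⟩ := hgr (ρf p k) hxbd j' hj'
        refine ⟨ιf p l', ?_, ?_⟩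
        · have h1 := hs.1
          unfold ρf at hl'
          unfold ιf
          split_ifs at hl' ⊢ <;> omega
        · have h1 : ιf p l' ≠ p := ι_ne p l'
          have h2 : ιf p l' ≠ 2*n+1 := by unfold ιf; split_ifs <;> omega
          have h3 : ιf p l' < 2*(n+1) := by unfold ιf; split_ifs <;> omega
          rw [hval _ h3 h1 h2, ρι, hcl', hlift]
      rcases Nat.lt_trichotomy j t with hjt | rfl | hjt
      · -- j < t : use a c-witness with value j
        rcases Nat.lt_or_ge j x with hjx | hjx
        · exact witness j hjx (by unfold liftv; split_ifs <;> omega)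
        · -- x ≤ j < t: then liftv t x = x, so j < insSeq k = x: contradiction
          exfalso
          unfold liftv at hj; split_ifs at hj <;> omega
      · -- j = t : use position p; need p < k, i.e. x ≥ t means ρf p k sees value ≥ t ⇒ ρf p k ≥ p
        have hxt : t ≤ x := by
          by_contra hcon
          push_neg at hcon
          unfold liftv at hj; split_ifs at hj <;> omega
        have hpk : p < k := by
          by_contra hcon
          push_neg at hcon
          have hkp : k < p := by omega
          have he : ρf p k = k := by unfold ρf; split_ifs <;> omega
          have h5 := hpre k hkp
          rw [he] at hx
          omega
        exact ⟨p, hpk, hspec p (Or.inl rfl)⟩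
      · -- j > t : witness value j - 1
        have : j - 1 < x := by unfold liftv at hj; split_ifs at hj <;> omega
        exact witness (j-1) this (by unfold liftv; split_ifs <;> omega)

lemma liftv_dropv {t x : ℕ} (h : x ≠ t) : liftv t (dropv t x) = x := by
  unfold liftv dropv; split_ifs <;> omega

lemma jstar_del {n : ℕ} {c : ℕ → ℕ} (h : SeqOK (n+1) c) {p : ℕ}
    (hp : p < 2*n+1) (hcp : c p = c (2*n+1))
    (huniq : ∀ q < 2*n+2, c q = c (2*n+1) → q = p ∨ q = 2*n+1) :
    jstar p (delSeq n p (c (2*n+1)) c) = c (2*n+1) := by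
  have hpre := prefix_lt h hp hcp huniq
  have him : (Finset.range p).image (delSeq n p (c (2*n+1)) c) = Finset.range (c (2*n+1)) := by
    have hsame : ∀ l < p, delSeq n p (c (2*n+1)) c l = c l := by
      intro l hl
      have hl2 : l < 2*n := by omega
      have hι : ιf p l = l := by unfold ιf; split_ifs <;> omega
      have := hpre l hl
      simp only [delSeq, if_pos hl2, hι]
      unfold dropv; split_ifs <;> omega
    ext j
    simp only [Finset.mem_image, Finset.mem_range]
    constructor
    · rintro ⟨l, hl, rfl⟩
      rw [hsame l hl]
      exact hpre l hl
    · intro hj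
      obtain ⟨l, hl, hcl⟩ := h.2.2.2 p (by omega) j (by omega)
      exact ⟨l, hl, by rw [hsame l hl, hcl]⟩
  rw [jstar, him, Finset.card_range]

lemma ins_del {n : ℕ} {c : ℕ → ℕ} (h : SeqOK (n+1) c) {p : ℕ}
    (hp : p < 2*n+1) (hcp : c p = c (2*n+1))
    (huniq : ∀ q < 2*n+2, c q = c (2*n+1) → q = p ∨ q = 2*n+1) :
    insSeq n p (delSeq n p (c (2*n+1)) c) = c := by
  set t := c (2*n+1) with ht
  have hjs : jstar p (delSeq n p t c) = t := jstar_del h hp hcp huniq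
  funext k
  rcases Nat.lt_or_ge k (2*n+2) with hk | hk
  · rcases Classical.em (k = p ∨ k = 2*n+1) with hs | hs
    · simp only [insSeq, if_pos hk, if_pos hs, hjs]
      rcases hs with rfl | rfl
      · exact hcp.symm
      · rfl
    · push_neg at hs
      simp only [insSeq, if_pos hk, if_neg (not_or.mpr hs), hjs]
      have hρ : ρf p k < 2*n := by unfold ρf; split_ifs <;> omega
      have hικ : ιf p (ρf p k) = k := ιρ p k hs.1
      simp only [delSeq, if_pos hρ, hικ]
      have hckt : c k ≠ t := by
        intro he
        rcases huniq k hk he with h1 | h1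
        · exact hs.1 h1
        · exact hs.2 h1
      exact liftv_dropv hckt
  · have h1 : c k = 0 := h.2.1 k (by omega)
    simp only [insSeq, if_neg (by omega : ¬ k < 2*n+2), h1]

lemma ins_val_ne {n : ℕ} {c : ℕ → ℕ} {p : ℕ} (hp : p < 2*n+1) :
    ∀ q < 2*n+2, insSeq n p c q = jstar p c → q = p ∨ q = 2*n+1 := by
  intro q hq hcq
  by_contra hcon
  push_neg at hcon
  simp only [insSeq, if_pos hq, if_neg (not_or.mpr hcon)] at hcq
  exact liftv_ne _ _ hcq

lemma del_ins {n : ℕ} {c : ℕ → ℕ} (h : SeqOK n c) {p : ℕ} (hp : p < 2*n+1) :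
    delSeq n p (insSeq n p c (2*n+1)) (insSeq n p c) = c := by
  have hL : insSeq n p c (2*n+1) = jstar p c := by
    simp [insSeq]
  rw [hL]
  funext k
  rcases Nat.lt_or_ge k (2*n) with hk | hk
  · have h1 : ιf p k ≠ p := ι_ne p k
    have h2 : ιf p k ≠ 2*n+1 := by unfold ιf; split_ifs <;> omega
    have h3 : ιf p k < 2*n+2 := by unfold ιf; split_ifs <;> omega
    simp only [delSeq, if_pos hk, insSeq, if_pos h3, if_neg (not_or.mpr ⟨h1, h2⟩), ρι,
      dropv_liftv]
  · simp only [delSeq, if_neg (by omega : ¬ k < 2*n)]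
    exact (h.2.1 k hk).symm

noncomputable def equivB (n : ℕ) : Seqn (n+1) ≃ Seqn n × Fin (2*n+1) where
  toFun c :=
    (⟨delSeq n (exists_partner c.2).choose (c.1 (2*n+1)) c.1,
      del_ok c.2 (exists_partner c.2).choose_spec.1 (exists_partner c.2).choose_spec.2.1
        (exists_partner c.2).choose_spec.2.2⟩,
     ⟨(exists_partner c.2).choose, (exists_partner c.2).choose_spec.1⟩)
  invFun x := ⟨insSeq n x.2.1 x.1.1, ins_ok x.1.2 x.2.2⟩
  left_inv c := by
    apply Subtype.ext
    exact ins_del c.2 (exists_partner c.2).choose_spec.1 (exists_partner c.2).choose_spec.2.1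
      (exists_partner c.2).choose_spec.2.2
  right_inv x := by
    obtain ⟨⟨c, hc⟩, ⟨p, hp⟩⟩ := x
    have hok : SeqOK (n+1) (insSeq n p c) := ins_ok hc hp
    have hL : insSeq n p c (2*n+1) = jstar p c := by simp [insSeq]
    -- the chosen partner must be p
    have hchoose : (exists_partner hok).choose = p := by
      have hs := (exists_partner hok).choose_spec
      rcases ins_val_ne hp _ (by omega) (hs.2.1.trans (by rw [hL])) with h1 | h1
      · exact h1
      · exfalso; have := hs.1; omega
    apply Prod.ext
    · apply Subtype.ext
      show delSeq n (exists_partner hok).choose (insSeq n p c (2*n+1)) (insSeq n p c) = c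
      rw [hchoose]
      exact del_ins hc hp
    · apply Fin.ext
      show (exists_partner hok).choose = p
      exact hchoose

lemma king_adj {n : ℕ} (v w : Fin 2 × Fin n) :
    (kingGraph n).Adj v w ↔ v ≠ w ∧ ((v.2 : ℕ) ≤ (w.2 : ℕ) + 1 ∧ (w.2 : ℕ) ≤ (v.2 : ℕ) + 1) := by
  rw [kingGraph, SimpleGraph.fromRel_adj]
  have h1 : (v.1 : ℕ) < 2 := v.1.isLt
  have h2 : (w.1 : ℕ) < 2 := w.1.isLt
  simp only [abs_le]
  constructor
  · rintro ⟨hne, h | h⟩ <;> exact ⟨hne, by omega⟩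
  · rintro ⟨hne, h⟩
    exact ⟨hne, Or.inl (by omega)⟩

lemma fin2_cases (i : Fin 2) : i = 0 ∨ i = 1 := by omega

lemma fin2_add_one_ne (i : Fin 2) : i + 1 ≠ i := by omega

lemma fin2_ne_iff {a b : Fin 2} : a ≠ b ↔ a = b + 1 := by omega

lemma fiber_two {n : ℕ} {c : ℕ → ℕ} (hc : SeqOK n c) {j : ℕ} (hj : j < n) :
    ∃ k0 k1, k0 < k1 ∧ k1 < 2*n ∧ c k0 = j ∧ c k1 = j ∧
      ∀ q < 2*n, c q = j → q = k0 ∨ q = k1 := by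
  have h2 := hc.1 j hj
  rw [Finset.card_eq_two] at h2
  obtain ⟨a, b, hab, hs⟩ := h2
  have mem_iff : ∀ q, q < 2*n ∧ c q = j ↔ q = a ∨ q = b := by
    intro q
    constructor
    · intro ⟨u1, u2⟩
      have : q ∈ (Finset.range (2*n)).filter (fun k => c k = j) := by simp [u1, u2]
      rw [hs] at this; simpa using this
    · intro hq
      have : q ∈ ({a, b} : Finset ℕ) := by simpa using hq
      rw [← hs] at this
      simpa using this
  have ha := (mem_iff a).2 (Or.inl rfl)
  have hb := (mem_iff b).2 (Or.inr rfl)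
  rcases Nat.lt_or_ge a b with h | h
  · exact ⟨a, b, h, hb.1, ha.2, hb.2, fun q hq hcq => (mem_iff q).1 ⟨hq, hcq⟩⟩
  · refine ⟨b, a, by omega, ha.1, hb.2, ha.2, fun q hq hcq => ((mem_iff q).1 ⟨hq, hcq⟩).symm⟩

section EquivA

variable {n : ℕ}

def toColFn (σ : (Fin 2 × Fin n) ≃ Fin (2 * n)) : ℕ → ℕ :=
  fun k => if h : k < 2*n then ((σ.symm ⟨k, h⟩).2 : ℕ) else 0

def toRowFn (σ : (Fin 2 × Fin n) ≃ Fin (2 * n)) : Fin n → Fin 2 :=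
  fun j => if (σ (0, j) : ℕ) ≤ (σ (1, j) : ℕ) then 0 else 1

lemma toCol_fiber (σ : (Fin 2 × Fin n) ≃ Fin (2 * n)) {j : ℕ} (hj : j < n) :
    (Finset.range (2*n)).filter (fun k => toColFn σ k = j) =
      {((σ (0, ⟨j, hj⟩)) : ℕ), ((σ (1, ⟨j, hj⟩)) : ℕ)} := by
  ext k
  simp only [Finset.mem_filter, Finset.mem_range, Finset.mem_insert, Finset.mem_singleton]
  constructor
  · rintro ⟨hk, hck⟩
    simp only [toColFn, dif_pos hk] at hck
    set v := σ.symm ⟨k, hk⟩ with hv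
    have hv2 : v.2 = ⟨j, hj⟩ := Fin.ext hck
    have happ : σ v = ⟨k, hk⟩ := σ.apply_symm_apply _
    rcases fin2_cases v.1 with h1 | h1
    · left
      have : v = (0, ⟨j, hj⟩) := by rw [← h1, ← hv2]
      rw [← this, happ]
    · right
      have : v = (1, ⟨j, hj⟩) := by rw [← h1, ← hv2]
      rw [← this, happ]
  · intro hk
    have key : ∀ i : Fin 2, k = ((σ (i, ⟨j, hj⟩)) : ℕ) → k < 2*n ∧ toColFn σ k = j := by
      rintro i rfl
      have hlt : ((σ (i, ⟨j, hj⟩)) : ℕ) < 2*n := (σ (i, ⟨j, hj⟩)).isLt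
      refine ⟨hlt, ?_⟩
      simp only [toColFn, dif_pos hlt]
      have : (⟨((σ (i, ⟨j, hj⟩)) : ℕ), hlt⟩ : Fin (2*n)) = σ (i, ⟨j, hj⟩) := Fin.ext rfl
      rw [this, σ.symm_apply_apply]
    rcases hk with hk | hk
    · exact key 0 hk
    · exact key 1 hk

lemma toCol_ok {σ : (Fin 2 × Fin n) ≃ Fin (2 * n)} (hn : 0 < n)
    (h1 : ∀ v, (σ v : ℕ) ≠ 0 → ∃ w, (kingGraph n).Adj v w ∧ σ w < σ v)
    (h2 : ∃ i : Fin 2, (σ (i, ⟨0, hn⟩) : ℕ) = 0) :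
    SeqOK n (toColFn σ) := by
  have hbd : ∀ k < 2*n, toColFn σ k < n := by
    intro k hk
    simp only [toColFn, dif_pos hk]
    exact (σ.symm ⟨k, hk⟩).2.isLt
  have hc0 : toColFn σ 0 = 0 := by
    obtain ⟨i, hi⟩ := h2
    have h02 : (0:ℕ) < 2*n := by omega
    simp only [toColFn, dif_pos h02]
    have : (⟨0, h02⟩ : Fin (2*n)) = σ (i, ⟨0, hn⟩) := Fin.ext (by simp [hi])
    rw [this, σ.symm_apply_apply]
  refine ⟨?_, fun k hk => by simp [toColFn]; omega, hbd, ?_⟩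
  · intro j hj
    rw [toCol_fiber σ hj]
    rw [Finset.card_insert_of_notMem, Finset.card_singleton]
    simp only [Finset.mem_singleton]
    intro he
    have : σ (0, ⟨j, hj⟩) = σ (1, ⟨j, hj⟩) := Fin.ext he
    have := σ.injective this
    simp at this
  · apply graded_of_valid hc0
    intro k hk hk0
    set v := σ.symm ⟨k, hk⟩ with hv
    have happ : σ v = ⟨k, hk⟩ := σ.apply_symm_apply _
    obtain ⟨w, hadj, hlt⟩ := h1 v (by rw [happ]; exact hk0)
    rw [king_adj] at hadj
    refine ⟨(σ w : ℕ), by rw [happ] at hlt; exact hlt, ?_, ?_⟩ <;>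
    · have hwlt : (σ w : ℕ) < 2*n := (σ w).isLt
      have : σ.symm ⟨(σ w : ℕ), hwlt⟩ = w := by
        rw [show (⟨(σ w : ℕ), hwlt⟩ : Fin (2*n)) = σ w from Fin.ext rfl, σ.symm_apply_apply]
      simp only [toColFn, dif_pos hwlt, dif_pos hk, this]
      rw [← hv]
      omega

end EquivA

section EquivA2

variable {n : ℕ}

def gfun (c : ℕ → ℕ) (hc : SeqOK n c) (r : Fin n → Fin 2) (k : Fin (2*n)) : Fin 2 × Fin n :=
  ((if ∀ l < (k:ℕ), c l ≠ c (k:ℕ) then r ⟨c (k:ℕ), hc.2.2.1 _ k.isLt⟩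
    else r ⟨c (k:ℕ), hc.2.2.1 _ k.isLt⟩ + 1), ⟨c (k:ℕ), hc.2.2.1 _ k.isLt⟩)

lemma gfun_bijective (c : ℕ → ℕ) (hc : SeqOK n c) (r : Fin n → Fin 2) :
    Function.Bijective (gfun c hc r) := by
  rw [Fintype.bijective_iff_injective_and_card]
  constructor
  · intro k k' he
    have hsnd : c (k:ℕ) = c (k':ℕ) := congrArg (fun x => (x.2 : ℕ)) he
    have hfst := congrArg Prod.fst he
    by_contra hne
    have hkk' : (k:ℕ) ≠ (k':ℕ) := fun h => hne (Fin.ext h)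
    -- wlog k < k'
    have main : ∀ a b : Fin (2*n), (a:ℕ) < (b:ℕ) → c (a:ℕ) = c (b:ℕ) →
        (gfun c hc r a).1 = (gfun c hc r b).1 → False := by
      intro a b hab hcab hf
      have hbnotfirst : ¬ ∀ l < (b:ℕ), c l ≠ c (b:ℕ) := by
        push_neg
        exact ⟨a, hab, hcab⟩
      rcases Classical.em (∀ l < (a:ℕ), c l ≠ c (a:ℕ)) with hfa | hfa
      · simp only [gfun, if_pos hfa, if_neg hbnotfirst] at hf
        have : (⟨c (a:ℕ), hc.2.2.1 _ a.isLt⟩ : Fin n) = ⟨c (b:ℕ), hc.2.2.1 _ b.isLt⟩ :=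
          Fin.ext hcab
        rw [this] at hf
        exact fin2_add_one_ne _ hf.symm
      · push_neg at hfa
        obtain ⟨l, hl, hcl⟩ := hfa
        have hjn : c (a:ℕ) < n := hc.2.2.1 _ a.isLt
        obtain ⟨k0, k1, h01, h1n, hc0, hc1, huniq⟩ := fiber_two hc hjn
        have e1 := huniq l (by omega) hcl
        have e2 := huniq (a:ℕ) a.isLt rfl
        have e3 := huniq (b:ℕ) b.isLt hcab.symm
        omega
    rcases Nat.lt_trichotomy (k:ℕ) (k':ℕ) with h | h | h
    · exact main k k' h hsnd hfst
    · exact hkk' h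
    · exact main k' k h hsnd.symm hfst.symm
  · simp

noncomputable def bEquiv (c : ℕ → ℕ) (hc : SeqOK n c) (r : Fin n → Fin 2) :
    (Fin 2 × Fin n) ≃ Fin (2*n) :=
  (Equiv.ofBijective (gfun c hc r) (gfun_bijective c hc r)).symm

lemma bEquiv_symm (c : ℕ → ℕ) (hc : SeqOK n c) (r : Fin n → Fin 2) (k : Fin (2*n)) :
    (bEquiv c hc r).symm k = gfun c hc r k := rfl

lemma bEquiv_gfun (c : ℕ → ℕ) (hc : SeqOK n c) (r : Fin n → Fin 2) (k : Fin (2*n)) :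
    bEquiv c hc r (gfun c hc r k) = k := by
  rw [show gfun c hc r k = (bEquiv c hc r).symm k from rfl, Equiv.apply_symm_apply]

lemma bEquiv_prop (hn : 0 < n) (c : ℕ → ℕ) (hc : SeqOK n c) (r : Fin n → Fin 2) :
    (∀ v, ((bEquiv c hc r) v : ℕ) ≠ 0 →
        ∃ w, (kingGraph n).Adj v w ∧ (bEquiv c hc r) w < (bEquiv c hc r) v) ∧
      ∃ i : Fin 2, ((bEquiv c hc r) (i, ⟨0, hn⟩) : ℕ) = 0 := by
  set σ := bEquiv c hc r with hσ
  constructor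
  · intro v hv
    set k := σ v with hk
    have hvk : v = gfun c hc r k := by rw [hk, hσ, ← bEquiv_symm, Equiv.symm_apply_apply]
    obtain ⟨l, hl, hd1, hd2⟩ := valid_of_graded hc.2.2.2 (k:ℕ) k.isLt (by omega)
    have hln : l < 2*n := by omega
    refine ⟨gfun c hc r ⟨l, hln⟩, ?_, ?_⟩
    · rw [king_adj]
      refine ⟨?_, ?_⟩
      · intro he
        have h1 : gfun c hc r k = gfun c hc r ⟨l, hln⟩ := by rw [← hvk]; exact he
        have h2 := (gfun_bijective c hc r).1 h1
        have := congrArg Fin.val h2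
        simp at this; omega
      · rw [hvk]
        simp only [gfun]
        exact ⟨by simpa using hd2, by simpa using hd1⟩
    · have h3 : σ (gfun c hc r ⟨l, hln⟩) = ⟨l, hln⟩ := bEquiv_gfun c hc r _
      rw [h3]
      exact Fin.lt_def.2 (by simpa using hl)
  · have h02 : (0:ℕ) < 2*n := by omega
    have hc0 : c 0 = 0 := graded_c0 hc.2.2.2 h02
    refine ⟨(gfun c hc r ⟨0, h02⟩).1, ?_⟩
    have : ((gfun c hc r ⟨0, h02⟩).1, (⟨0, hn⟩ : Fin n)) = gfun c hc r ⟨0, h02⟩ := by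
      rw [Prod.ext_iff]
      refine ⟨rfl, ?_⟩
      show (⟨0, hn⟩ : Fin n) = (gfun c hc r ⟨0, h02⟩).2
      apply Fin.ext
      simp [gfun, hc0]
    rw [this, bEquiv_gfun]

end EquivA2

section EquivA3

variable {n : ℕ}

lemma toCol_val (σ : (Fin 2 × Fin n) ≃ Fin (2 * n)) (k : Fin (2*n)) :
    toColFn σ (k:ℕ) = ((σ.symm k).2 : ℕ) := by
  simp only [toColFn, dif_pos k.isLt, Fin.eta]

lemma mem_fiber_iff (σ : (Fin 2 × Fin n) ≃ Fin (2 * n)) {j : ℕ} (hj : j < n) (l : ℕ) :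
    (l < 2*n ∧ toColFn σ l = j) ↔
      (l = ((σ (0, ⟨j, hj⟩)) : ℕ) ∨ l = ((σ (1, ⟨j, hj⟩)) : ℕ)) := by
  have := toCol_fiber σ hj
  constructor
  · intro ⟨h1, h2⟩
    have : l ∈ (Finset.range (2*n)).filter (fun k => toColFn σ k = j) := by simp [h1, h2]
    rw [toCol_fiber σ hj] at this
    simpa using this
  · intro h
    have : l ∈ ({((σ (0, ⟨j, hj⟩)) : ℕ), ((σ (1, ⟨j, hj⟩)) : ℕ)} : Finset ℕ) := by simpa using h
    rw [← toCol_fiber σ hj] at this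
    simpa using this

lemma gfun_toCol (hn : 0 < n) {σ : (Fin 2 × Fin n) ≃ Fin (2 * n)}
    (hσ1 : ∀ v, (σ v : ℕ) ≠ 0 → ∃ w, (kingGraph n).Adj v w ∧ σ w < σ v)
    (hσ2 : ∃ i : Fin 2, (σ (i, ⟨0, hn⟩) : ℕ) = 0) (k : Fin (2*n)) :
    gfun (toColFn σ) (toCol_ok hn hσ1 hσ2) (toRowFn σ) k = σ.symm k := by
  set c := toColFn σ with hcdef
  set v := σ.symm k with hvdef
  have hval : c (k:ℕ) = (v.2 : ℕ) := toCol_val σ k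
  have hsnd : (⟨c (k:ℕ), (toCol_ok hn hσ1 hσ2).2.2.1 _ k.isLt⟩ : Fin n) = v.2 := Fin.ext hval
  have hjlt : (v.2 : ℕ) < n := v.2.isLt
  set a := ((σ (0, v.2)) : ℕ) with hadef
  set b := ((σ (1, v.2)) : ℕ) with hbdef
  have hv2eta : (⟨(v.2 : ℕ), hjlt⟩ : Fin n) = v.2 := Fin.eta _ _
  have hmem : ∀ l : ℕ, (l < 2*n ∧ c l = (v.2:ℕ)) ↔ (l = a ∨ l = b) := by
    intro l
    have := mem_fiber_iff σ hjlt l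
    rw [hv2eta] at this
    exact this
  have hab : a ≠ b := by
    intro he
    have : σ (0, v.2) = σ (1, v.2) := Fin.ext he
    have := σ.injective this
    simp at this
  have hk_mem : (k:ℕ) = a ∨ (k:ℕ) = b := (hmem (k:ℕ)).1 ⟨k.isLt, hval⟩
  -- v.1 determination
  have hv1 : ∀ i : Fin 2, (k:ℕ) = ((σ (i, v.2)) : ℕ) → v.1 = i := by
    intro i hi
    have : k = σ (i, v.2) := Fin.ext hi
    have hv : v = (i, v.2) := by rw [hvdef, this, σ.symm_apply_apply]
    rw [hv]
  -- firstness
  have hfirst_min : ∀ l : ℕ, l < (k:ℕ) → c l = c (k:ℕ) → (l = a ∨ l = b) := by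
    intro l hl hcl
    exact (hmem l).1 ⟨by omega, by rw [← hval, hcl]⟩
  apply Prod.ext_iff.mpr
  refine ⟨?_, hsnd⟩
  show (if ∀ l < (k:ℕ), c l ≠ c (k:ℕ) then toRowFn σ ⟨c (k:ℕ), _⟩ else toRowFn σ ⟨c (k:ℕ), _⟩ + 1) = v.1
  rw [hsnd]
  have hrow : toRowFn σ v.2 = if a ≤ b then 0 else 1 := rfl
  rcases hk_mem with hk | hk
  · have hv1' := hv1 0 hk
    rcases Nat.lt_or_ge a b with hlt | hge
    · -- k = a = min : first
      rw [if_pos, hrow, if_pos (by omega), hv1']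
      intro l hl hcl
      rcases hfirst_min l hl hcl with rfl | rfl <;> omega
    · -- k = a = max (b < a) : not first
      have hba : b < a := by omega
      rw [if_neg, hrow, if_neg (by omega), hv1']
      · decide
      · push_neg
        exact ⟨b, by omega, by rw [hval]; exact ((hmem b).2 (Or.inr rfl)).2⟩
  · have hv1' := hv1 1 hk
    rcases Nat.lt_or_ge a b with hlt | hge
    · -- k = b = max : not first
      rw [if_neg, hrow, if_pos (by omega), hv1']
      · decide
      · push_neg
        exact ⟨a, by omega, by rw [hval]; exact ((hmem a).2 (Or.inl rfl)).2⟩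
    · -- k = b = min : first
      have hba : b < a := by omega
      rw [if_pos, hrow, if_neg (by omega), hv1']
      intro l hl hcl
      rcases hfirst_min l hl hcl with rfl | rfl <;> omega

lemma toCol_bEquiv (c : ℕ → ℕ) (hc : SeqOK n c) (r : Fin n → Fin 2) :
    toColFn (bEquiv c hc r) = c := by
  funext k
  rcases Nat.lt_or_ge k (2*n) with hk | hk
  · simp only [toColFn, dif_pos hk]
    rw [bEquiv_symm]
    rfl
  · simp only [toColFn, dif_neg (by omega : ¬ k < 2*n)]
    exact (hc.2.1 k hk).symm

lemma toRow_bEquiv (c : ℕ → ℕ) (hc : SeqOK n c) (r : Fin n → Fin 2) :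
    toRowFn (bEquiv c hc r) = r := by
  funext j
  obtain ⟨k0, k1, h01, h1n, hc0, hc1, huniq⟩ := fiber_two hc j.isLt
  have hk0n : k0 < 2*n := by omega
  set σ := bEquiv c hc r with hσ
  have hfirst : ∀ l < k0, c l ≠ c k0 := by
    intro l hl hcl
    rcases huniq l (by omega) (by rw [← hc0]; exact hcl) with rfl | rfl <;> omega
  have hnotfirst : ¬ ∀ l < k1, c l ≠ c k1 := by
    push_neg
    exact ⟨k0, h01, by rw [hc0, hc1]⟩
  have e0 : gfun c hc r ⟨k0, hk0n⟩ = (r j, j) := by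
    apply Prod.ext_iff.mpr
    constructor
    · show (if ∀ l < k0, c l ≠ c k0 then r ⟨c k0, _⟩ else r ⟨c k0, _⟩ + 1) = r j
      rw [if_pos hfirst]
      exact congrArg r (Fin.ext hc0)
    · exact Fin.ext hc0
  have e1 : gfun c hc r ⟨k1, h1n⟩ = (r j + 1, j) := by
    apply Prod.ext_iff.mpr
    constructor
    · show (if ∀ l < k1, c l ≠ c k1 then r ⟨c k1, _⟩ else r ⟨c k1, _⟩ + 1) = r j + 1
      rw [if_neg hnotfirst]
      exact congrArg (· + 1) (congrArg r (Fin.ext hc1))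
    · exact Fin.ext hc1
  have s0 : σ (r j, j) = ⟨k0, hk0n⟩ := by rw [← e0]; exact bEquiv_gfun c hc r _
  have s1 : σ (r j + 1, j) = ⟨k1, h1n⟩ := by rw [← e1]; exact bEquiv_gfun c hc r _
  show (if (σ (0, j) : ℕ) ≤ (σ (1, j) : ℕ) then (0:Fin 2) else 1) = r j
  rcases fin2_cases (r j) with hr | hr
  · rw [hr] at s0 s1
    have hone : (0 : Fin 2) + 1 = 1 := by decide
    rw [hone] at s1
    rw [s0, s1, if_pos (by simp; omega), hr]
  · rw [hr] at s0 s1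
    have hone : (1 : Fin 2) + 1 = 0 := by decide
    rw [hone] at s1
    rw [s0, s1, if_neg (by simp; omega), hr]

noncomputable def equivA (hn : 0 < n) :
    {σ : (Fin 2 × Fin n) ≃ Fin (2 * n) //
        (∀ v, (σ v : ℕ) ≠ 0 → ∃ w, (kingGraph n).Adj v w ∧ σ w < σ v) ∧
        ∃ i : Fin 2, (σ (i, ⟨0, hn⟩) : ℕ) = 0} ≃ (Seqn n × (Fin n → Fin 2)) where
  toFun s := (⟨toColFn s.1, toCol_ok hn s.2.1 s.2.2⟩, toRowFn s.1)
  invFun x := ⟨bEquiv x.1.1 x.1.2 x.2, bEquiv_prop hn x.1.1 x.1.2 x.2⟩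
  left_inv s := by
    obtain ⟨σ, hσ⟩ := s
    apply Subtype.ext
    show bEquiv (toColFn σ) _ (toRowFn σ) = σ
    have key : (Equiv.ofBijective _ (gfun_bijective (toColFn σ) (toCol_ok hn hσ.1 hσ.2) (toRowFn σ))) = σ.symm :=
      Equiv.ext (gfun_toCol hn hσ.1 hσ.2)
    rw [bEquiv, key, Equiv.symm_symm]
  right_inv x := by
    obtain ⟨⟨c, hc⟩, r⟩ := x
    apply Prod.ext_iff.mpr
    exact ⟨Subtype.ext (toCol_bEquiv c hc r), toRow_bEquiv c hc r⟩

end EquivA3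

section Counting

lemma seqn_zero_card : Nat.card (Seqn 0) = 1 := by
  rw [Nat.card_eq_one_iff_unique]
  constructor
  · constructor
    intro x y
    apply Subtype.ext
    funext k
    show x.val k = y.val k
    rw [x.2.2.1 k (by omega), y.2.2.1 k (by omega)]
  · exact ⟨⟨fun _ => 0, fun j hj => by omega, fun k hk => rfl, fun k hk => by omega,
      fun k hk => by omega⟩⟩

lemma seqn_card_succ (n : ℕ) : Nat.card (Seqn (n+1)) = Nat.card (Seqn n) * (2*n+1) := by
  rw [Nat.card_congr (equivB n), Nat.card_prod, Nat.card_eq_fintype_card (α := Fin (2*n+1)), Fintype.card_fin]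

lemma seqn_card_fact (n : ℕ) :
    n.factorial * (2^n * Nat.card (Seqn n)) = (2*n).factorial := by
  induction n with
  | zero => simp [seqn_zero_card]
  | succ n ih =>
    rw [seqn_card_succ]
    have h1 : 2*(n+1) = (2*n+1) + 1 := by ring
    rw [h1, Nat.factorial_succ, Nat.factorial_succ, Nat.factorial_succ, ← ih]
    ring

lemma main_card (n : ℕ) (hn : 0 < n) :
    Nat.card {σ : (Fin 2 × Fin n) ≃ Fin (2 * n) //
        (∀ v, (σ v : ℕ) ≠ 0 → ∃ w, (kingGraph n).Adj v w ∧ σ w < σ v) ∧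
        ∃ i : Fin 2, (σ (i, ⟨0, hn⟩) : ℕ) = 0} = (2 * n).factorial / n.factorial := by
  rw [Nat.card_congr (equivA hn), Nat.card_prod, Nat.card_eq_fintype_card (α := Fin n → Fin 2)]
  rw [Fintype.card_fun, Fintype.card_fin, Fintype.card_fin]
  symm
  apply Nat.div_eq_of_eq_mul_left (Nat.factorial_pos n)
  rw [← seqn_card_fact n]
  ring

end Counting


/-- The number of random walk labelings of the `2 × n` King's graph whose label `1`
(here label `0 : Fin (2*n)`) lies in the first column equals `(2n)!/n!`. -/
theorem rwl_king_first_column (n : ℕ) (hn : 1 ≤ n) :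
    Nat.card {σ : (Fin 2 × Fin n) ≃ Fin (2 * n) //
        (∀ v, (σ v : ℕ) ≠ 0 → ∃ w, (kingGraph n).Adj v w ∧ σ w < σ v) ∧
        ∃ i : Fin 2, (σ (i, ⟨0, by omega⟩) : ℕ) = 0} =
      (2 * n).factorial / n.factorial := by
  exact main_card n hn
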